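/- (Embedding of Fourier–Lebesgue spaces into modulation spaces.) Let s ∈ ℝ and 2 ≤ q ≤ ∞. There exists a constant C = C(s,q) > 0 such that for every f ∈ L²(ℝ), ‖f‖_{M^s_{2,q}} ≤ C ‖ ξ ↦ ⟨ξ⟩^s 𝓕f(ξ) ‖_{L^q(ℝ)}; that is, the space Ĥ^{q'}_s = {f : ⟨·⟩^s 𝓕f ∈ L^q(ℝ)} embeds continuously into M^s_{2,q}. -/

import Mathlib

open MeasureTheory Real Complex FourierTransform Filter ENNReal

noncomputable section

/-- The `□_k` piece of the modulation norm of the function `f = 𝓕⁻¹ g` with Fourier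
transform `g`: `‖□_k f‖_{L²} = ‖𝓕⁻¹(χ_{[k-1/2, k+1/2]} ⬝ 𝓕f)‖_{L²}`. -/
def boxNorm (g : ℝ → ℂ) (k : ℤ) : ℝ≥0∞ :=
  eLpNorm (𝓕⁻
    ((Set.Icc ((k : ℝ) - 1/2) ((k : ℝ) + 1/2)).indicator g)) 2 volume

/-- The modulation space norm `‖f‖_{M^s_{2,q}} = (∑_{k∈ℤ} ⟨k⟩^{sq} ‖□_k f‖_{L²}^q)^{1/q}`
(with the supremum over `k` when `q = ∞`) of the function `f = 𝓕⁻¹ g` with Fourier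
transform `g`, where `⟨k⟩ = (1+k²)^{1/2}`. -/
def modNorm (s : ℝ) (q : ℝ≥0∞) (g : ℝ → ℂ) : ℝ≥0∞ :=
  if q = ∞ then ⨆ k : ℤ, ENNReal.ofReal ((1 + (k : ℝ) ^ 2) ^ (s / 2)) * boxNorm g k
  else (∑' k : ℤ, (ENNReal.ofReal ((1 + (k : ℝ) ^ 2) ^ (s / 2)) * boxNorm g k) ^ q.toReal)
    ^ (1 / q.toReal)

lemma plancherel_indicator (a : ℝ) (g : ℝ → ℂ) (hgm : Measurable g)
    (hg : MemLp ((Set.Icc a (a+1)).indicator g) 2 volume) :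
    eLpNorm (𝓕⁻ ((Set.Icc a (a+1)).indicator g)) 2 volume
      ≤ eLpNorm ((Set.Icc a (a+1)).indicator g) 2 volume := by
  haveI : Fact ((0:ℝ) < 1) := ⟨one_pos⟩
  set I : Set ℝ := Set.Icc a (a+1) with hI
  set J : Set ℝ := Set.Ioc a (a+1) with hJ
  set h : ℝ → ℂ := I.indicator g with hh
  set F : ℝ → ℂ := 𝓕⁻ h with hF
  have hmeas : Measurable h := hgm.indicator measurableSet_Icc
  have hzero : ∀ v ∉ I, h v = 0 := fun v hv => Set.indicator_of_notMem hv g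
  -- finiteness of restricted measure
  haveI : IsFiniteMeasure (volume.restrict I) := ⟨by
    rw [Measure.restrict_apply_univ, hI, Real.volume_Icc]; exact ofReal_lt_top⟩
  have hint : Integrable h volume := by
    rw [hh, integrable_indicator_iff measurableSet_Icc]
    have : MemLp g 2 (volume.restrict I) := by
      rw [hh, memLp_indicator_iff_restrict measurableSet_Icc] at hg
      exact hg
    exact memLp_one_iff_integrable.mp (this.mono_exponent one_le_two)
  have hFcont : Continuous F := by
    show Continuous (VectorFourier.fourierIntegral 𝐞 volume (-innerₗ ℝ) h)
    exact VectorFourier.fourierIntegral_continuous Real.continuous_fourierChar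
      (by simp only [LinearMap.neg_apply, innerₗ_apply_apply]; exact continuous_inner.neg) hint
  -- the key Parseval identity for each `t`
  have key : ∀ t : ℝ, ∑' n : ℤ, ((‖F (t + n)‖₊ : ℝ≥0∞)) ^ (2:ℕ)
      = ∫⁻ x in J, ((‖h x‖₊ : ℝ≥0∞)) ^ (2:ℕ) ∂volume := by
    intro t
    set ht : ℝ → ℂ := fun v => (𝐞 (v * t) : ℂ) * h v with hht
    have hhtm : Measurable ht := by
      have c1 : Continuous fun v : ℝ => ((𝐞 (v * t) : Circle) : ℂ) :=
        continuous_induced_dom.comp (Real.continuous_fourierChar.comp (continuous_id.mul continuous_const))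
      exact c1.measurable.mul hmeas
    set u : AddCircle (1:ℝ) → ℂ := AddCircle.liftIoc (1:ℝ) a ht with hu'
    have hum : Measurable u := by
      have : Measurable (AddCircle.equivIoc (1:ℝ) a) := (AddCircle.measurableEquivIoc (1:ℝ) a).measurable
      exact (hhtm.comp measurable_subtype_coe).comp this
    have mp : MeasurePreserving ((↑) : ℝ → AddCircle (1:ℝ)) (volume.restrict J) volume :=
      AddCircle.measurePreserving_mk (T := (1:ℝ)) a
    have hvol : (volume : Measure (AddCircle (1:ℝ))) = AddCircle.haarAddCircle := by
      rw [AddCircle.volume_eq_smul_haarAddCircle]; simp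
    have hmap : (AddCircle.haarAddCircle : Measure (AddCircle (1:ℝ)))
        = Measure.map ((↑) : ℝ → AddCircle (1:ℝ)) (volume.restrict J) := by
      rw [← hvol, ← mp.map_eq]
    have hueq : ∀ᵐ x : ℝ ∂(volume.restrict J), u ↑x = ht x := by
      refine (ae_restrict_iff' measurableSet_Ioc).2 (ae_of_all _ fun x hx => ?_)
      exact AddCircle.liftIoc_coe_apply hx
    have hnorm_ht : ∀ x, ‖ht x‖ = ‖h x‖ := by
      intro x; rw [hht]; simp [norm_mul, Circle.norm_coe]
    have hht2 : MemLp ht 2 (volume.restrict J) := by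
      have h2 : MemLp h 2 (volume.restrict J) := hg.restrict J
      exact ⟨hhtm.aestronglyMeasurable,
        by rw [eLpNorm_congr_norm_ae (ae_of_all _ hnorm_ht)]; exact h2.2⟩
    have hu : MemLp u 2 AddCircle.haarAddCircle := by
      refine ⟨hum.aestronglyMeasurable, ?_⟩
      rw [hmap, eLpNorm_map_measure (by rw [← hmap]; exact hum.aestronglyMeasurable)
        mp.measurable.aemeasurable]
      have : eLpNorm ((u ∘ (↑)) : ℝ → ℂ) 2 (volume.restrict J) = eLpNorm ht 2 (volume.restrict J) :=
        eLpNorm_congr_ae hueq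
      rw [this]; exact hht2.2
    set uLp := hu.toLp u with huLp
    have hcoeff : ∀ m : ℤ, fourierCoeff (uLp : AddCircle (1:ℝ) → ℂ) m = fourierCoeff u m := by
      intro m
      refine integral_congr_ae ?_
      filter_upwards [hu.coeFn_toLp] with x hx
      rw [hx]
    have hptwise : ∀ n : ℤ, ∀ v : ℝ, (𝐞 (v * (t + n)) : ℂ) * h v
        = fourier n (v : AddCircle (1:ℝ)) * ht v := by
      intro n v
      simp only [hht]
      rw [Real.fourierChar_apply, Real.fourierChar_apply, fourier_coe_apply]
      conv_rhs => rw [← mul_assoc, ← Complex.exp_add]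
      congr 2
      push_cast
      ring
    have hFn : ∀ n : ℤ, F (t + n) = fourierCoeff u (-n) := by
      intro n
      rw [fourierCoeff_eq_intervalIntegral u (-n) a]
      have e1 : ∫ x in a..a + 1, (fourier (-(-n)) (x : AddCircle (1:ℝ))) • u ↑x
          = ∫ x in J, (fourier n (x : AddCircle (1:ℝ))) * ht x := by
        rw [intervalIntegral.integral_of_le (by linarith : a ≤ a + 1)]
        refine setIntegral_congr_fun measurableSet_Ioc fun x hx => ?_
        simp only [neg_neg, hu']
        rw [AddCircle.liftIoc_coe_apply hx, smul_eq_mul]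
      rw [e1, one_div_one, one_smul]
      have e2 : F (t + n) = ∫ v : ℝ, (𝐞 (v * (t + n)) : ℂ) * h v := by
        rw [hF, Real.fourierInv_eq_fourier_neg, Real.fourier_real_eq]
        congr 1
        ext v
        rw [Circle.smul_def, smul_eq_mul, mul_neg, neg_neg]
      rw [e2]
      have e3 : (fun v : ℝ => (𝐞 (v * (t + n)) : ℂ) * h v)
          = fun v : ℝ => I.indicator (fun x => (fourier n (x : AddCircle (1:ℝ))) * ht x) v := by
        ext v
        by_cases hv : v ∈ I
        · rw [Set.indicator_of_mem hv, hptwise n v]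
        · rw [Set.indicator_of_notMem hv, hzero v hv, mul_zero]
      rw [e3, integral_indicator measurableSet_Icc]
      rw [integral_Icc_eq_integral_Ioc]
    -- Parseval
    have hsum : Summable (fun m : ℤ => ‖fourierCoeff u m‖ ^ 2) := by
      have hml := lp.memℓp ((fourierBasis (T := (1:ℝ))).repr uLp)
      rw [memℓp_gen_iff (by norm_num : 0 < (2:ℝ≥0∞).toReal)] at hml
      have : (fun i : ℤ => ‖(fourierBasis (T := (1:ℝ))).repr uLp i‖ ^ (2:ℝ≥0∞).toReal)
          = fun m : ℤ => ‖fourierCoeff u m‖ ^ 2 := by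
        ext m
        rw [fourierBasis_repr, hcoeff m, ENNReal.toReal_ofNat, Real.rpow_two]
      rwa [this] at hml
    have hpars : ∑' m : ℤ, ‖fourierCoeff u m‖ ^ 2 = ∫ x in J, ‖h x‖ ^ 2 := by
      have hP := tsum_sq_fourierCoeff uLp
      simp only [hcoeff] at hP
      rw [hP]
      have e4 : ∫ x : AddCircle (1:ℝ), ‖(uLp : AddCircle (1:ℝ) → ℂ) x‖ ^ 2 ∂AddCircle.haarAddCircle
          = ∫ x : AddCircle (1:ℝ), ‖u x‖ ^ 2 ∂AddCircle.haarAddCircle := by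
        refine integral_congr_ae ?_
        filter_upwards [hu.coeFn_toLp] with x hx
        rw [hx]
      rw [e4, ← hvol, ← AddCircle.integral_preimage (1:ℝ) a (fun x => ‖u x‖ ^ 2)]
      refine setIntegral_congr_fun measurableSet_Ioc fun x hx => ?_
      simp only [hu']
      rw [AddCircle.liftIoc_coe_apply hx, hnorm_ht]
    have hInt2 : Integrable (fun x => ‖h x‖ ^ 2) (volume.restrict J) := by
      have hnr := (hg.restrict J).norm_rpow two_ne_zero ENNReal.ofNat_ne_top
      rw [ENNReal.toReal_ofNat] at hnr
      have : (fun x => ‖h x‖ ^ (2:ℝ)) = fun x => ‖h x‖ ^ 2 := by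
        ext x; rw [Real.rpow_two]
      rw [this] at hnr
      exact memLp_one_iff_integrable.mp hnr
    calc ∑' n : ℤ, ((‖F (t + n)‖₊ : ℝ≥0∞)) ^ (2:ℕ)
        = ∑' n : ℤ, ((‖fourierCoeff u (-n)‖₊ : ℝ≥0∞)) ^ (2:ℕ) := by
          exact tsum_congr fun n => by rw [hFn n]
      _ = ∑' m : ℤ, ((‖fourierCoeff u m‖₊ : ℝ≥0∞)) ^ (2:ℕ) :=
          (Equiv.neg ℤ).tsum_eq (fun m => ((‖fourierCoeff u m‖₊ : ℝ≥0∞)) ^ (2:ℕ))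
      _ = ENNReal.ofReal (∑' m : ℤ, ‖fourierCoeff u m‖ ^ 2) := by
          rw [ENNReal.ofReal_tsum_of_nonneg (fun m => sq_nonneg _) hsum]
          exact tsum_congr fun m => by
            rw [ENNReal.ofReal_pow (norm_nonneg _), ofReal_norm, enorm_eq_nnnorm]
      _ = ENNReal.ofReal (∫ x in J, ‖h x‖ ^ 2) := by rw [hpars]
      _ = ∫⁻ x in J, ((‖h x‖₊ : ℝ≥0∞)) ^ (2:ℕ) ∂volume := by
          rw [MeasureTheory.ofReal_integral_eq_lintegral_ofReal hInt2
            (ae_of_all _ fun x => sq_nonneg _)]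
          exact lintegral_congr fun x => by
            rw [ENNReal.ofReal_pow (norm_nonneg _), ofReal_norm, enorm_eq_nnnorm]
  -- outer decomposition of the line into unit intervals
  have main : ∫⁻ x, ((‖F x‖₊ : ℝ≥0∞)) ^ (2:ℕ) ∂volume
      ≤ ∫⁻ x, ((‖h x‖₊ : ℝ≥0∞)) ^ (2:ℕ) ∂volume := by
    set Φ : ℝ → ℝ≥0∞ := fun x => ((‖F x‖₊ : ℝ≥0∞)) ^ (2:ℕ) with hΦ
    have hΦm : Measurable Φ := (hFcont.measurable.nnnorm.coe_nnreal_ennreal).pow_const 2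
    have hdisj : Pairwise (Function.onFun Disjoint fun n : ℤ => Set.Ioc ((n:ℝ)) ((n:ℝ)+1)) := by
      intro m n hmn
      simp only [Function.onFun]
      rw [Set.Ioc_disjoint_Ioc]
      rcases lt_or_gt_of_ne hmn with hl | hl
      · have h1 : (m:ℝ) + 1 ≤ (n:ℝ) := by exact_mod_cast hl
        exact le_trans (min_le_left _ _) (le_trans h1 (le_max_right _ _))
      · have h1 : (n:ℝ) + 1 ≤ (m:ℝ) := by exact_mod_cast hl
        exact le_trans (min_le_right _ _) (le_trans h1 (le_max_left _ _))
    have hcover : (⋃ n : ℤ, Set.Ioc ((n:ℝ)) ((n:ℝ)+1)) = Set.univ := iUnion_Ioc_intCast ℝ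
    have htrans : ∀ n : ℤ, ∫⁻ x in Set.Ioc ((n:ℝ)) ((n:ℝ)+1), Φ x ∂volume
        = ∫⁻ t in Set.Ioc (0:ℝ) 1, Φ (t + n) ∂volume := by
      intro n
      have hemb : MeasurableEmbedding (fun x : ℝ => x + (n:ℝ)) :=
        (MeasurableEquiv.addRight (n:ℝ)).measurableEmbedding
      have hmp : MeasurePreserving (fun x : ℝ => x + (n:ℝ)) volume volume :=
        measurePreserving_add_right volume (n:ℝ)
      have := hmp.setLIntegral_comp_emb hemb Φ (Set.Ioc (0:ℝ) 1)
      rw [Set.image_add_const_Ioc, zero_add, add_comm (1:ℝ) (n:ℝ)] at this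
      exact this.symm
    calc ∫⁻ x, Φ x ∂volume = ∫⁻ x in ⋃ n : ℤ, Set.Ioc ((n:ℝ)) ((n:ℝ)+1), Φ x ∂volume := by
          rw [hcover, setLIntegral_univ]
      _ = ∑' n : ℤ, ∫⁻ x in Set.Ioc ((n:ℝ)) ((n:ℝ)+1), Φ x ∂volume :=
          lintegral_iUnion (fun n => measurableSet_Ioc) hdisj Φ
      _ = ∑' n : ℤ, ∫⁻ t in Set.Ioc (0:ℝ) 1, Φ (t + n) ∂volume := by
          exact tsum_congr fun n => htrans n
      _ = ∫⁻ t in Set.Ioc (0:ℝ) 1, ∑' n : ℤ, Φ (t + n) ∂volume := by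
          refine (lintegral_tsum fun n => ?_).symm
          exact ((hΦm.comp (measurable_id.add_const _)).aemeasurable)
      _ = ∫⁻ _ in Set.Ioc (0:ℝ) 1, (∫⁻ x in J, ((‖h x‖₊ : ℝ≥0∞)) ^ (2:ℕ) ∂volume) ∂volume := by
          exact lintegral_congr fun t => key t
      _ = ∫⁻ x in J, ((‖h x‖₊ : ℝ≥0∞)) ^ (2:ℕ) ∂volume := by
          rw [lintegral_const, Measure.restrict_apply_univ, Real.volume_Ioc]
          norm_num
      _ ≤ ∫⁻ x, ((‖h x‖₊ : ℝ≥0∞)) ^ (2:ℕ) ∂volume := setLIntegral_le_lintegral _ _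
  -- conclude via the `L²` norm formula
  rw [eLpNorm_eq_lintegral_rpow_enorm_toReal (two_ne_zero) (ENNReal.ofNat_ne_top),
    eLpNorm_eq_lintegral_rpow_enorm_toReal (two_ne_zero) (ENNReal.ofNat_ne_top)]
  simp only [enorm_eq_nnnorm]
  apply ENNReal.rpow_le_rpow _ (by norm_num)
  have hconv : ∀ ψ : ℝ → ℂ, ∫⁻ x, (‖ψ x‖₊ : ℝ≥0∞) ^ (2:ℝ≥0∞).toReal ∂volume
      = ∫⁻ x, ((‖ψ x‖₊ : ℝ≥0∞)) ^ (2:ℕ) ∂volume := by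
    intro ψ
    refine lintegral_congr fun x => ?_
    rw [ENNReal.toReal_ofNat, ENNReal.rpow_two]
  rw [hconv, hconv]
  exact main

lemma weight_bound (s : ℝ) (k : ℤ) (ξ : ℝ) (hξ : ξ ∈ Set.Icc ((k:ℝ)-1/2) ((k:ℝ)+1/2)) :
    (1 + (k:ℝ)^2) ^ (s/2) ≤ 2 ^ (|s|/2) * (1 + ξ^2) ^ (s/2) := by
  have h1 : (0:ℝ) < 1 + (k:ℝ)^2 := by positivity
  have h2 : (0:ℝ) < 1 + ξ^2 := by positivity
  obtain ⟨hl, hr⟩ := hξ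
  have hA : 1 + (k:ℝ)^2 ≤ 2 * (1 + ξ^2) := by nlinarith [sq_nonneg ((k:ℝ) + 2*(ξ - k))]
  have hB : 1 + ξ^2 ≤ 2 * (1 + (k:ℝ)^2) := by nlinarith [sq_nonneg ((k:ℝ) - (ξ - k))]
  rcases le_or_gt 0 s with hs | hs
  · rw [_root_.abs_of_nonneg hs]
    calc (1 + (k:ℝ)^2) ^ (s/2) ≤ (2 * (1 + ξ^2)) ^ (s/2) :=
          Real.rpow_le_rpow h1.le hA (by positivity)
      _ = 2 ^ (s/2) * (1 + ξ^2) ^ (s/2) := Real.mul_rpow (by norm_num) h2.le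
  · rw [_root_.abs_of_neg hs]
    have hx : s/2 = -((-s)/2) := by ring
    rw [hx, Real.rpow_neg h1.le, Real.rpow_neg h2.le]
    have hApos : 0 < (1 + (k:ℝ)^2) ^ ((-s)/2) := Real.rpow_pos_of_pos h1 _
    have hBpos : 0 < (1 + ξ^2) ^ ((-s)/2) := Real.rpow_pos_of_pos h2 _
    have key : (1 + ξ^2) ^ ((-s)/2) ≤ 2 ^ ((-s)/2) * (1 + (k:ℝ)^2) ^ ((-s)/2) := by
      calc (1 + ξ^2) ^ ((-s)/2) ≤ (2 * (1 + (k:ℝ)^2)) ^ ((-s)/2) :=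
            Real.rpow_le_rpow h2.le hB (by linarith)
        _ = 2 ^ ((-s)/2) * (1 + (k:ℝ)^2) ^ ((-s)/2) := Real.mul_rpow (by norm_num) h1.le
    have hdiv : (1 + ξ^2) ^ ((-s)/2) / (1 + (k:ℝ)^2) ^ ((-s)/2) ≤ 2 ^ ((-s)/2) :=
      (div_le_iff₀ hApos).2 key
    calc ((1 + (k:ℝ)^2) ^ ((-s)/2))⁻¹
        = ((1 + ξ^2) ^ ((-s)/2) / (1 + (k:ℝ)^2) ^ ((-s)/2)) * ((1 + ξ^2) ^ ((-s)/2))⁻¹ := by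
          field_simp
      _ ≤ 2 ^ ((-s)/2) * ((1 + ξ^2) ^ ((-s)/2))⁻¹ :=
          mul_le_mul_of_nonneg_right hdiv (by positivity)

lemma box_bound (s : ℝ) (q : ℝ≥0∞) (hq2 : 2 ≤ q) (g : ℝ → ℂ) (hgm : Measurable g)
    (hg : MemLp g 2 volume) (k : ℤ) :
    ENNReal.ofReal ((1 + (k:ℝ)^2) ^ (s/2)) * boxNorm g k
      ≤ ENNReal.ofReal (2 ^ (|s|/2)) *
        eLpNorm (fun ξ : ℝ => (((1 + ξ^2) ^ (s/2) : ℝ) : ℂ) * g ξ) q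
          (volume.restrict (Set.Icc ((k:ℝ)-1/2) ((k:ℝ)+1/2))) := by
  set a : ℝ := (k:ℝ) - 1/2 with ha
  have hset : Set.Icc ((k:ℝ)-1/2) ((k:ℝ)+1/2) = Set.Icc a (a+1) := by
    rw [ha]; congr 1; ring
  set Ik : Set ℝ := Set.Icc a (a+1) with hIk
  set μk : Measure ℝ := volume.restrict Ik with hμk
  haveI : IsProbabilityMeasure μk := ⟨by
    rw [hμk, Measure.restrict_apply_univ, hIk, Real.volume_Icc]; norm_num⟩
  set G : ℝ → ℂ := fun ξ : ℝ => (((1 + ξ^2) ^ (s/2) : ℝ) : ℂ) * g ξ with hG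
  have hGm : Measurable G := by
    apply Measurable.mul ?_ hgm
    exact (Complex.measurable_ofReal.comp
      ((continuous_const.add (continuous_pow 2)).measurable.pow_const _))
  -- step 1 : Plancherel for `boxNorm`
  have step1 : boxNorm g k ≤ eLpNorm g 2 μk := by
    rw [boxNorm, hset]
    refine le_trans (plancherel_indicator a g hgm ?_) ?_
    · exact hg.indicator measurableSet_Icc
    · rw [eLpNorm_indicator_eq_eLpNorm_restrict measurableSet_Icc]
  -- step 2 : weight transfer
  have wkpos : (0:ℝ) < (1 + (k:ℝ)^2) ^ (s/2) := by positivity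
  have step2 : ENNReal.ofReal ((1 + (k:ℝ)^2) ^ (s/2)) * eLpNorm g 2 μk
      ≤ ENNReal.ofReal (2 ^ (|s|/2)) * eLpNorm G 2 μk := by
    have e1 : ENNReal.ofReal ((1 + (k:ℝ)^2) ^ (s/2)) * eLpNorm g 2 μk
        = eLpNorm (fun ξ => ((((1 + (k:ℝ)^2) ^ (s/2) : ℝ)) : ℂ) * g ξ) 2 μk := by
      rw [show (fun ξ => ((((1 + (k:ℝ)^2) ^ (s/2) : ℝ)) : ℂ) * g ξ)
          = ((((1 + (k:ℝ)^2) ^ (s/2) : ℝ) : ℂ) • g) from rfl]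
      rw [eLpNorm_const_smul]
      congr 1
      rw [← ofReal_norm]
      congr 1
      rw [Complex.norm_real, Real.norm_eq_abs, abs_of_pos wkpos]
    have e2 : ENNReal.ofReal (2 ^ (|s|/2)) * eLpNorm G 2 μk
        = eLpNorm (fun ξ => (((2:ℝ) ^ (|s|/2) : ℝ) : ℂ) * G ξ) 2 μk := by
      rw [show (fun ξ => (((2:ℝ) ^ (|s|/2) : ℝ) : ℂ) * G ξ)
          = ((((2:ℝ) ^ (|s|/2) : ℝ) : ℂ) • G) from rfl]
      rw [eLpNorm_const_smul]
      congr 1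
      rw [← ofReal_norm]
      congr 1
      rw [Complex.norm_real, Real.norm_eq_abs, abs_of_pos (Real.rpow_pos_of_pos two_pos _)]
    rw [e1, e2]
    refine eLpNorm_mono_ae ?_
    rw [hμk]
    refine (ae_restrict_iff' measurableSet_Icc).2 (ae_of_all _ fun ξ hξ => ?_)
    have hw := weight_bound s k ξ (hset ▸ hξ)
    have hξpos : (0:ℝ) < (1 + ξ^2) ^ (s/2) := by positivity
    rw [norm_mul, norm_mul, hG]
    simp only [Complex.norm_real, Real.norm_eq_abs, abs_of_pos wkpos, abs_of_pos (Real.rpow_pos_of_pos two_pos _)]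
    calc (1 + (k:ℝ)^2) ^ (s/2) * ‖g ξ‖ ≤ (2 ^ (|s|/2) * (1 + ξ^2) ^ (s/2)) * ‖g ξ‖ :=
          mul_le_mul_of_nonneg_right hw (norm_nonneg _)
      _ = 2 ^ (|s|/2) * ‖(((1 + ξ^2) ^ (s/2) : ℝ) : ℂ) * g ξ‖ := by
          rw [norm_mul, Complex.norm_real, Real.norm_eq_abs, abs_of_pos hξpos]; ring
  -- step 3 : Hölder on the probability space
  have step3 : eLpNorm G 2 μk ≤ eLpNorm G q μk :=
    eLpNorm_le_eLpNorm_of_exponent_le hq2 hGm.aestronglyMeasurable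
  calc ENNReal.ofReal ((1 + (k:ℝ)^2) ^ (s/2)) * boxNorm g k
      ≤ ENNReal.ofReal ((1 + (k:ℝ)^2) ^ (s/2)) * eLpNorm g 2 μk :=
        mul_le_mul_right step1 _
    _ ≤ ENNReal.ofReal (2 ^ (|s|/2)) * eLpNorm G 2 μk := step2
    _ ≤ ENNReal.ofReal (2 ^ (|s|/2)) * eLpNorm G q μk := mul_le_mul_right step3 _
    _ = ENNReal.ofReal (2 ^ (|s|/2)) *
        eLpNorm G q (volume.restrict (Set.Icc ((k:ℝ)-1/2) ((k:ℝ)+1/2))) := by rw [hμk, hset]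


/-- **Embedding of Fourier–Lebesgue spaces into modulation spaces.** Let `s ∈ ℝ` and
`2 ≤ q ≤ ∞`. There is a constant `C = C(s,q) > 0` such that every `f = 𝓕⁻¹ g ∈ L²(ℝ)`
with Fourier transform `g` satisfies `‖f‖_{M^s_{2,q}} ≤ C ‖⟨ξ⟩^s 𝓕f(ξ)‖_{L^q(ℝ)}`;
that is, `Ĥ^{q'}_s ⊂ M^s_{2,q}` continuously. -/
theorem fourierLebesgue_embeds_modulation (s : ℝ) (q : ℝ≥0∞) (hq : 2 ≤ q) :
    ∃ C : ℝ, 0 < C ∧ ∀ g : ℝ → ℂ, MemLp g 2 volume →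
      modNorm s q g ≤ ENNReal.ofReal C *
        eLpNorm (fun ξ : ℝ => (((1 + ξ ^ 2) ^ (s / 2) : ℝ) : ℂ) * g ξ) q volume := by
  refine ⟨2 ^ (|s|/2), Real.rpow_pos_of_pos two_pos _, fun g hg => ?_⟩
  -- replace `g` by a measurable representative
  set g' : ℝ → ℂ := hg.1.mk g with hg'def
  have hg'sm : StronglyMeasurable g' := hg.1.stronglyMeasurable_mk
  have hgg' : g =ᵐ[volume] g' := hg.1.ae_eq_mk
  have hg' : MemLp g' 2 volume := hg.ae_eq hgg'
  have hg'm : Measurable g' := hg'sm.measurable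
  have hbox : ∀ k : ℤ, boxNorm g k = boxNorm g' k := by
    intro k
    have hind : (Set.Icc ((k:ℝ)-1/2) ((k:ℝ)+1/2)).indicator g
        =ᵐ[volume] (Set.Icc ((k:ℝ)-1/2) ((k:ℝ)+1/2)).indicator g' := by
      filter_upwards [hgg'] with x hx
      simp only [Set.indicator]
      split_ifs
      · exact hx
      · rfl
    have hFT : 𝓕⁻ ((Set.Icc ((k:ℝ)-1/2) ((k:ℝ)+1/2)).indicator g)
        = 𝓕⁻ ((Set.Icc ((k:ℝ)-1/2) ((k:ℝ)+1/2)).indicator g') := by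
      funext w
      rw [Real.fourierInv_eq, Real.fourierInv_eq]
      refine integral_congr_ae ?_
      filter_upwards [hind] with v hv
      rw [hv]
    rw [boxNorm, boxNorm, hFT]
  have hrhs : eLpNorm (fun ξ : ℝ => (((1 + ξ ^ 2) ^ (s / 2) : ℝ) : ℂ) * g ξ) q volume
      = eLpNorm (fun ξ : ℝ => (((1 + ξ ^ 2) ^ (s / 2) : ℝ) : ℂ) * g' ξ) q volume := by
    refine eLpNorm_congr_ae ?_
    filter_upwards [hgg'] with x hx
    rw [hx]
  have hmod : modNorm s q g = modNorm s q g' := by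
    rw [modNorm, modNorm]
    simp only [hbox]
  rw [hmod, hrhs]
  set c : ℝ := 2 ^ (|s|/2) with hc
  set G : ℝ → ℂ := fun ξ : ℝ => (((1 + ξ ^ 2) ^ (s / 2) : ℝ) : ℂ) * g' ξ with hGdef
  have hGm : Measurable G := by
    apply Measurable.mul ?_ hg'm
    exact (Complex.measurable_ofReal.comp
      ((continuous_const.add (continuous_pow 2)).measurable.pow_const _))
  by_cases hqi : q = ∞
  · subst hqi
    rw [modNorm, if_pos rfl]
    refine iSup_le fun k => (box_bound s ∞ le_top g' hg'm hg' k).trans ?_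
    exact mul_le_mul_right (eLpNorm_mono_measure _ Measure.restrict_le_self) _
  · rw [modNorm, if_neg hqi]
    have hq0 : q ≠ 0 := by
      intro h0
      rw [h0] at hq
      exact absurd hq (by simp)
    set r : ℝ := q.toReal with hr
    have hr2 : (2:ℝ) ≤ r := by
      have := ENNReal.toReal_mono hqi hq
      rwa [ENNReal.toReal_ofNat] at this
    have hr0 : (0:ℝ) < r := lt_of_lt_of_le two_pos hr2
    have hterm : ∀ k : ℤ,
        (ENNReal.ofReal ((1 + (k:ℝ)^2) ^ (s/2)) * boxNorm g' k) ^ r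
          ≤ (ENNReal.ofReal c) ^ r *
            (eLpNorm G q (volume.restrict (Set.Icc ((k:ℝ)-1/2) ((k:ℝ)+1/2)))) ^ r := by
      intro k
      rw [← ENNReal.mul_rpow_of_nonneg _ _ hr0.le]
      exact ENNReal.rpow_le_rpow (box_bound s q hq g' hg'm hg' k) hr0.le
    have hsum : ∑' k : ℤ, (eLpNorm G q (volume.restrict (Set.Icc ((k:ℝ)-1/2) ((k:ℝ)+1/2)))) ^ r
        ≤ (eLpNorm G q volume) ^ r := by
      have hek : ∀ k : ℤ,
          (eLpNorm G q (volume.restrict (Set.Icc ((k:ℝ)-1/2) ((k:ℝ)+1/2)))) ^ r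
            = ∫⁻ x in Set.Ico ((k:ℝ)-1/2) ((k:ℝ)+1/2), ((‖G x‖₊ : ℝ≥0∞)) ^ r ∂volume := by
        intro k
        rw [eLpNorm_eq_lintegral_rpow_enorm_toReal hq0 hqi]
        simp only [enorm_eq_nnnorm]
        rw [← hr, ← ENNReal.rpow_mul,
          one_div_mul_cancel hr0.ne', ENNReal.rpow_one]
        rw [Measure.restrict_congr_set (Ico_ae_eq_Icc).symm]
      have hdisj : Pairwise (Function.onFun Disjoint
          fun k : ℤ => Set.Ico ((k:ℝ)-1/2) ((k:ℝ)+1/2)) := by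
        intro m n hmn
        simp only [Function.onFun]
        rw [Set.Ico_disjoint_Ico]
        rcases lt_or_gt_of_ne hmn with hl | hl
        · have h1 : (m:ℝ) + 1 ≤ (n:ℝ) := by exact_mod_cast hl
          refine le_trans (min_le_left _ _) (le_trans (by linarith) (le_max_right _ _))
        · have h1 : (n:ℝ) + 1 ≤ (m:ℝ) := by exact_mod_cast hl
          refine le_trans (min_le_right _ _) (le_trans (by linarith) (le_max_left _ _))
      calc ∑' k : ℤ, (eLpNorm G q (volume.restrict (Set.Icc ((k:ℝ)-1/2) ((k:ℝ)+1/2)))) ^ r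
          = ∑' k : ℤ, ∫⁻ x in Set.Ico ((k:ℝ)-1/2) ((k:ℝ)+1/2), ((‖G x‖₊ : ℝ≥0∞)) ^ r ∂volume :=
            tsum_congr hek
        _ = ∫⁻ x in ⋃ k : ℤ, Set.Ico ((k:ℝ)-1/2) ((k:ℝ)+1/2), ((‖G x‖₊ : ℝ≥0∞)) ^ r ∂volume :=
            (lintegral_iUnion (fun k => measurableSet_Ico) hdisj _).symm
        _ ≤ ∫⁻ x, ((‖G x‖₊ : ℝ≥0∞)) ^ r ∂volume := setLIntegral_le_lintegral _ _
        _ = (eLpNorm G q volume) ^ r := by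
            rw [eLpNorm_eq_lintegral_rpow_enorm_toReal hq0 hqi]
            simp only [enorm_eq_nnnorm]
            rw [← hr, ← ENNReal.rpow_mul,
              one_div_mul_cancel hr0.ne', ENNReal.rpow_one]
    calc (∑' k : ℤ, (ENNReal.ofReal ((1 + (k:ℝ)^2) ^ (s/2)) * boxNorm g' k) ^ q.toReal)
          ^ (1 / q.toReal)
        ≤ ((ENNReal.ofReal c) ^ r * ∑' k : ℤ,
            (eLpNorm G q (volume.restrict (Set.Icc ((k:ℝ)-1/2) ((k:ℝ)+1/2)))) ^ r)
            ^ (1 / r) := by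
          rw [← ENNReal.tsum_mul_left]
          exact ENNReal.rpow_le_rpow (ENNReal.tsum_le_tsum hterm) (by positivity)
      _ ≤ ((ENNReal.ofReal c) ^ r * (eLpNorm G q volume) ^ r) ^ (1 / r) := by
          exact ENNReal.rpow_le_rpow (mul_le_mul_right hsum _) (by positivity)
      _ = ENNReal.ofReal c * eLpNorm G q volume := by
          rw [← ENNReal.mul_rpow_of_nonneg _ _ hr0.le, ← ENNReal.rpow_mul,
            mul_one_div_cancel hr0.ne', ENNReal.rpow_one]


end
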